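/- Let λ > 0 and μ > 0, and let F : ℝ × ℝ → ℝ × ℝ be the constant-mobility vector field F(z,m) = ((μ/2)·z·|z| + λ·z + 2·m, −μ·m·|z| − μ·z). A point (z,m) with m ∈ [−1,1] satisfies F(z,m) = (0,0) if and only if (z,m) = (0,0), or (z,m) = (z₀, −1), or (z,m) = (−z₀, 1), where z₀ = (√(λ² + 4μ) − λ)/μ. -/

import Mathlib

/-- Fixed points of the constant-mobility vector field
`F(z,m) = ((μ/2)·z·|z| + λ·z + 2·m, −μ·m·|z| − μ·z)` in the strip `m ∈ [−1,1]`: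
they are exactly the origin and `(±z₀, ∓1)` with `z₀ = (√(λ² + 4μ) − λ)/μ`. -/
theorem constant_mobility_fixed_points (lam mu : ℝ) (hlam : 0 < lam) (hmu : 0 < mu)
    (z m : ℝ) (hm : m ∈ Set.Icc (-1 : ℝ) 1) :
    ((mu / 2) * z * |z| + lam * z + 2 * m = 0 ∧ -(mu * m * |z|) - mu * z = 0) ↔
      ((z = 0 ∧ m = 0) ∨
        (z = (Real.sqrt (lam ^ 2 + 4 * mu) - lam) / mu ∧ m = -1) ∨
        (z = -((Real.sqrt (lam ^ 2 + 4 * mu) - lam) / mu) ∧ m = 1)) := by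
  set s := Real.sqrt (lam ^ 2 + 4 * mu) with hsdef
  have hpos : (0:ℝ) < lam ^ 2 + 4 * mu := by positivity
  have hs2 : s ^ 2 = lam ^ 2 + 4 * mu := Real.sq_sqrt hpos.le
  have hsl : lam < s := by
    nlinarith [hs2, Real.sqrt_nonneg (lam ^ 2 + 4 * mu)]
  have hspos : 0 < s := lt_trans hlam hsl
  constructor
  · rintro ⟨h1, h2⟩
    rcases lt_trichotomy z 0 with hz | hz | hz
    · -- z < 0 : |z| = -z, m = 1, z = -z₀
      have habs : |z| = -z := abs_of_neg hz
      rw [habs] at h1 h2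
      have hm1 : m = 1 := by
        have : mu * z * (m - 1) = 0 := by ring_nf; ring_nf at h2; linarith
        rcases mul_eq_zero.mp this with h | h
        · rcases mul_eq_zero.mp h with h | h
          · exact absurd h hmu.ne'
          · exact absurd h hz.ne
        · linarith
      subst hm1
      have key : (mu * z - lam - s) * (mu * z - lam + s) = 0 := by
        nlinarith [h1, hs2]
      have h3 : mu * z - lam - s ≠ 0 := by nlinarith
      have h4 : mu * z - lam + s = 0 := by
        rcases mul_eq_zero.mp key with h | h
        · exact absurd h h3
        · exact h
      right; right
      constructor
      · field_simp
        linarith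
      · rfl
    · -- z = 0
      subst hz
      left
      simp at h1
      constructor
      · rfl
      · linarith
    · -- z > 0 : |z| = z, m = -1, z = z₀
      have habs : |z| = z := abs_of_pos hz
      rw [habs] at h1 h2
      have hm1 : m = -1 := by
        have : mu * z * (m + 1) = 0 := by ring_nf; ring_nf at h2; linarith
        rcases mul_eq_zero.mp this with h | h
        · rcases mul_eq_zero.mp h with h | h
          · exact absurd h hmu.ne'
          · exact absurd h hz.ne'
        · linarith
      subst hm1
      have key : (mu * z + lam - s) * (mu * z + lam + s) = 0 := by
        nlinarith [h1, hs2]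
      have h4 : mu * z + lam - s = 0 := by
        rcases mul_eq_zero.mp key with h | h
        · exact h
        · nlinarith
      right; left
      constructor
      · field_simp
        linarith
      · rfl
  · rintro (⟨hz, hm0⟩ | ⟨hz, hm0⟩ | ⟨hz, hm0⟩)
    · subst hz; subst hm0; simp
    · subst hz; subst hm0
      have hz0 : 0 < (s - lam) / mu := div_pos (by linarith) hmu
      rw [abs_of_pos hz0]
      constructor
      · field_simp
        linear_combination hs2
      · ring
    · subst hz; subst hm0
      have hz0 : 0 < (s - lam) / mu := div_pos (by linarith) hmu
      rw [abs_neg, abs_of_pos hz0]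
      constructor
      · field_simp
        linear_combination (-1) * hs2
      · ring
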